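/- arXiv:2509.21083 — 5 statements merged into one kernel-verified Lean document; each statement's English description precedes it below -/
import Mathlib

section
/- Let r ≥ 5 be a prime, ζ a primitive r-th root of unity, K = ℚ(ζ + ζ⁻¹), and for 1 ≤ j ≤ (r-1)/2 set θ_j = ζ^j + ζ^{-j}. Then θ_j + 2 is a unit in the ring of integers of K. -/
open NumberField IntermediateField

theorem theta_add_two_isUnit (r : ℕ+) (hr : (r : ℕ).Prime) (hr5 : 5 ≤ (r : ℕ))
    (ζ : CyclotomicField r ℚ) (hζ : IsPrimitiveRoot ζ (r : ℕ))
    (K : IntermediateField ℚ (CyclotomicField r ℚ)) (hK : K = ℚ⟮ζ + ζ⁻¹⟯)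
    (j : ℕ) (hj1 : 1 ≤ j) (hj2 : j ≤ ((r : ℕ) - 1) / 2)
    (θ : 𝓞 K)
    (hθ : algebraMap K (CyclotomicField r ℚ) (θ : K) = ζ ^ j + ζ⁻¹ ^ j) :
    IsUnit (θ + 2) := by
  classical
  have hrpos : 0 < (r : ℕ) := hr.pos
  have hrodd : Odd (r : ℕ) := hr.odd_of_ne_two (by omega)
  have hζ0 : ζ ≠ 0 := hζ.ne_zero hrpos.ne'
  set ξ : CyclotomicField r ℚ := ζ ^ j with hξdef
  have hξ0 : ξ ≠ 0 := pow_ne_zero _ hζ0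
  have h2j : ¬ ((r : ℕ) ∣ 2 * j) := by
    intro h
    have h1 : 2 * j ≤ (r : ℕ) - 1 := by omega
    have := Nat.le_of_dvd (by omega) h
    omega
  have hξne1 : ξ ≠ 1 := by
    intro h
    exact h2j (dvd_mul_of_dvd_right ((hζ.pow_eq_one_iff_dvd j).mp h) 2)
  have hξnem1 : ξ ≠ -1 := by
    intro h
    apply h2j
    rw [mul_comm]
    refine (hζ.pow_eq_one_iff_dvd (j * 2)).mp ?_
    rw [pow_mul, ← hξdef, h]
    ring
  have hξp1 : ξ + 1 ≠ 0 := by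
    intro h
    exact hξnem1 (by linear_combination h)
  have hξsum : ζ ^ j + ζ⁻¹ ^ j + 2 = (ξ + 1) ^ 2 / ξ := by
    rw [inv_pow, ← hξdef]
    field_simp
    ring
  have hξsum0 : ζ ^ j + ζ⁻¹ ^ j + 2 ≠ 0 := by
    rw [hξsum]
    exact div_ne_zero (pow_ne_zero _ hξp1) hξ0
  have hint : ∀ η : CyclotomicField r ℚ, η ^ (r : ℕ) = 1 → IsIntegral ℤ η := by
    intro η hη
    refine ⟨Polynomial.X ^ (r : ℕ) - Polynomial.C 1, Polynomial.monic_X_pow_sub_C 1 hrpos.ne', ?_⟩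
    simp [hη]
  have hξr : ξ ^ (r : ℕ) = 1 := by
    rw [hξdef, ← pow_mul, mul_comm, pow_mul, hζ.pow_eq_one, one_pow]
  have hprodall :
      ∏ η ∈ Polynomial.nthRootsFinset (r : ℕ) (1 : CyclotomicField r ℚ), ((-1 : CyclotomicField r ℚ) - η) = -2 := by
    have h := Polynomial.X_pow_sub_one_eq_prod hrpos hζ
    apply_fun Polynomial.eval (-1 : CyclotomicField r ℚ) at h
    simp only [Polynomial.eval_sub, Polynomial.eval_pow, Polynomial.eval_X, Polynomial.eval_one,
      Polynomial.eval_prod, Polynomial.eval_C] at h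
    rw [hrodd.neg_one_pow] at h
    rw [← h]
    norm_num
  have h1mem : (1 : CyclotomicField r ℚ) ∈ Polynomial.nthRootsFinset (r : ℕ) (1 : CyclotomicField r ℚ) :=
    Polynomial.one_mem_nthRootsFinset hrpos
  have hξmem : ξ ∈ (Polynomial.nthRootsFinset (r : ℕ) (1 : CyclotomicField r ℚ)).erase 1 :=
    Finset.mem_erase.mpr ⟨hξne1, (Polynomial.mem_nthRootsFinset hrpos 1).mpr hξr⟩
  have hprod1 :
      ∏ η ∈ (Polynomial.nthRootsFinset (r : ℕ) (1 : CyclotomicField r ℚ)).erase 1,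
        ((-1 : CyclotomicField r ℚ) - η) = 1 := by
    have h := Finset.mul_prod_erase _ (fun η => (-1 : CyclotomicField r ℚ) - η) h1mem
    rw [hprodall] at h
    have hb : (fun η => (-1 : CyclotomicField r ℚ) - η) 1 = -2 := by norm_num
    rw [show (-1 - 1 : CyclotomicField r ℚ) = -2 by norm_num] at h
    exact mul_left_cancel₀ (show (-2 : CyclotomicField r ℚ) ≠ 0 by norm_num)
      (h.trans (mul_one (-2 : CyclotomicField r ℚ)).symm)
  set P : CyclotomicField r ℚ :=
    ∏ η ∈ ((Polynomial.nthRootsFinset (r : ℕ) (1 : CyclotomicField r ℚ)).erase 1).erase ξ,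
      ((-1 : CyclotomicField r ℚ) - η) with hPdef
  have hPmul : (-1 - ξ) * P = 1 := by
    rw [hPdef, Finset.mul_prod_erase _ (fun η => (-1 : CyclotomicField r ℚ) - η) hξmem, hprod1]
  have hPint : IsIntegral ℤ P := by
    rw [← mem_integralClosure_iff]
    refine Subalgebra.prod_mem _ ?_
    intro η hη
    have hηmem := Finset.mem_of_mem_erase (Finset.mem_of_mem_erase hη)
    have hint' : IsIntegral ℤ η := hint η ((Polynomial.mem_nthRootsFinset hrpos 1).mp hηmem)
    exact Subalgebra.sub_mem _ (Subalgebra.neg_mem _ (Subalgebra.one_mem _))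
      ((mem_integralClosure_iff ℤ (CyclotomicField r ℚ)).mpr hint')
  set c : CyclotomicField r ℚ := ξ * P ^ 2 with hcdef
  have hcint : IsIntegral ℤ c := (hint ξ hξr).mul (hPint.pow 2)
  have hmul1 : (ζ ^ j + ζ⁻¹ ^ j + 2) * c = 1 := by
    have key : ((ξ + 1) ^ 2 / ξ) * (ξ * P ^ 2) = ((-1 - ξ) * P) ^ 2 := by
      field_simp
      ring
    rw [hξsum, hcdef, key, hPmul, one_pow]
  have hmap2 : algebraMap K (CyclotomicField r ℚ) ((θ : K) + 2) = ζ ^ j + ζ⁻¹ ^ j + 2 := by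
    rw [map_add, hθ, map_ofNat]
  have hne : ((θ : K) + 2) ≠ 0 := by
    intro h
    rw [h, map_zero] at hmap2
    exact hξsum0 hmap2.symm
  set w : K := ((θ : K) + 2)⁻¹ with hwdef
  have hwmap : algebraMap K (CyclotomicField r ℚ) w = c := by
    rw [hwdef, map_inv₀, hmap2]
    exact inv_eq_of_mul_eq_one_right hmul1
  have hwint : IsIntegral ℤ w := by
    have inj : Function.Injective (algebraMap K (CyclotomicField r ℚ)) :=
      (algebraMap K (CyclotomicField r ℚ)).injective
    exact (isIntegral_algebraMap_iff inj).mp (hwmap ▸ hcint)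
  refine IsUnit.of_mul_eq_one ⟨w, hwint⟩ (RingOfIntegers.coe_injective ?_)
  show (((θ + 2) * ⟨w, hwint⟩ : 𝓞 K) : K) = ((1 : 𝓞 K) : K)
  have hcoe : (((θ + 2) * ⟨w, hwint⟩ : 𝓞 K) : K) = ((θ : K) + 2) * w := by
    push_cast
    rfl
  rw [hcoe, hwdef, mul_inv_cancel₀ hne]
  rfl
end

section
/- Let r ≥ 5 be a prime, ζ a primitive r-th root of unity, K = ℚ(ζ + ζ⁻¹), and 𝔯 the unique prime of O_K above r. For 1 ≤ j < k ≤ (r-1)/2, the principal ideal generated by θ_j − θ_k equals 𝔯, where θ_j = ζ^j + ζ^{-j}. -/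
open NumberField IntermediateField

lemma aux_assoc {R : Type*} [CommRing R] [IsDomain R] {z : R} {r m : ℕ} (hz : z ^ r = 1)
    (hco : Nat.Coprime m r) (hr : 1 < r) : Associated (1 - z) (1 - z ^ m) := by
  refine associated_of_dvd_dvd ?_ ?_
  · simpa using sub_dvd_pow_sub_pow 1 z m
  · obtain ⟨t, -, ht⟩ := Nat.exists_mul_mod_eq_one_of_coprime hco hr
    have h1 : (z ^ m) ^ t = z := by
      have hmt : m * t = m * t % r + r * (m * t / r) := (Nat.mod_add_div _ _).symm
      rw [← pow_mul, hmt, ht, pow_add, pow_one, pow_mul, hz, one_pow, mul_one]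
    have h2 := sub_dvd_pow_sub_pow 1 (z ^ m) t
    rwa [one_pow, h1] at h2

lemma aux_sub_one_mem {R : Type*} [CommRing R] {r : ℕ} (hr : r.Prime)
    {Q : Ideal R} (hQ : Q.IsPrime) (hrQ : (r : R) ∈ Q) {z : R} (hz : z ^ r = 1) :
    z - 1 ∈ Q := by
  haveI := Fact.mk hr
  haveI := hQ
  have h0 : ((r : ℕ) : R ⧸ Q) = 0 := by
    rw [← map_natCast (Ideal.Quotient.mk Q), Ideal.Quotient.eq_zero_iff_mem]; exact hrQ
  have hchar : ringChar (R ⧸ Q) = r :=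
    (hr.eq_one_or_self_of_dvd _ (ringChar.dvd h0)).resolve_left CharP.ringChar_ne_one
  haveI : CharP (R ⧸ Q) r := hchar ▸ ringChar.charP (R ⧸ Q)
  have hpow : (Ideal.Quotient.mk Q z - 1) ^ r = 0 := by
    rw [sub_pow_char, ← map_pow, hz, map_one, one_pow, sub_self]
  have h1 := pow_eq_zero_iff hr.ne_zero |>.mp hpow
  rwa [← map_one (Ideal.Quotient.mk Q), ← map_sub, Ideal.Quotient.eq_zero_iff_mem] at h1

set_option maxHeartbeats 2000000 in
set_option synthInstance.maxHeartbeats 400000 in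
theorem span_theta_sub_theta_eq (r : ℕ+) (hr : (r : ℕ).Prime) (hr5 : 5 ≤ (r : ℕ))
    (ζ : CyclotomicField r ℚ) (hζ : IsPrimitiveRoot ζ (r : ℕ))
    (K : IntermediateField ℚ (CyclotomicField r ℚ)) (hK : K = ℚ⟮ζ + ζ⁻¹⟯)
    (𝔯 : Ideal (𝓞 K)) (h𝔯 : 𝔯.IsPrime) (h𝔯r : ((r : ℕ) : 𝓞 K) ∈ 𝔯) (h𝔯bot : 𝔯 ≠ ⊥)
    (j k : ℕ) (hj1 : 1 ≤ j) (hjk : j < k) (hk : k ≤ ((r : ℕ) - 1) / 2)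
    (θj θk : 𝓞 K)
    (hθj : algebraMap K (CyclotomicField r ℚ) (θj : K) = ζ ^ j + ζ⁻¹ ^ j)
    (hθk : algebraMap K (CyclotomicField r ℚ) (θk : K) = ζ ^ k + ζ⁻¹ ^ k) :
    Ideal.span {θj - θk} = 𝔯 := by
  subst hK
  haveI hfact : Fact (r : ℕ).Prime := ⟨hr⟩
  have hr1 : 1 < (r : ℕ) := by omega
  have hdiv : ((r : ℕ) - 1) / 2 * 2 ≤ (r : ℕ) - 1 := Nat.div_mul_le_self _ _
  have hjkr : j + k < (r : ℕ) := by omega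
  have hζ0 : ζ ≠ 0 := hζ.ne_zero (by omega)
  have hirr : Irreducible (Polynomial.cyclotomic r ℚ) :=
    Polynomial.cyclotomic.irreducible_rat r.pos
  haveI : IsCyclotomicExtension {(r : ℕ)} ℚ (CyclotomicField r ℚ) := by
    haveI : NeZero ((r : ℕ) : ℚ) := ⟨by simp⟩
    exact CyclotomicField.isCyclotomicExtension _ _
  haveI : NumberField (CyclotomicField r ℚ) :=
    IsCyclotomicExtension.numberField {(r : ℕ)} ℚ (CyclotomicField r ℚ)
  -- ζ is not in K
  have hnotmem : ζ ∉ (algebraMap (ℚ⟮ζ + ζ⁻¹⟯) (CyclotomicField r ℚ)).range := by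
    rintro ⟨y, hy⟩
    have hz0 := IsCyclotomicExtension.zeta_spec r ℚ (CyclotomicField r ℚ)
    have hz0inv : IsPrimitiveRoot (IsCyclotomicExtension.zeta r ℚ (CyclotomicField r ℚ))⁻¹ r :=
      hz0.inv
    set σ := IsCyclotomicExtension.fromZetaAut hz0inv hirr with hσdef
    have hspec : σ (IsCyclotomicExtension.zeta r ℚ (CyclotomicField r ℚ)) =
        (IsCyclotomicExtension.zeta r ℚ (CyclotomicField r ℚ))⁻¹ :=
      IsCyclotomicExtension.fromZetaAut_spec hz0inv hirr
    haveI : NeZero (r : ℕ) := ⟨by omega⟩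
    obtain ⟨s, -, hs⟩ := hz0.eq_pow_of_pow_eq_one hζ.pow_eq_one
    have hσζ : σ ζ = ζ⁻¹ := by rw [← hs, map_pow, hspec, inv_pow]
    have hσc : σ (ζ + ζ⁻¹) = ζ + ζ⁻¹ := by
      rw [map_add, map_inv₀, hσζ, inv_inv, add_comm]
    let T : IntermediateField ℚ (CyclotomicField r ℚ) :=
      { carrier := {x | σ x = x}
        mul_mem' := fun {a b} ha hb => by
          simp only [Set.mem_setOf_eq, map_mul] at *; rw [ha, hb]
        one_mem' := map_one σ
        add_mem' := fun {a b} ha hb => by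
          simp only [Set.mem_setOf_eq, map_add] at *; rw [ha, hb]
        zero_mem' := map_zero σ
        inv_mem' := fun a ha => by
          simp only [Set.mem_setOf_eq, map_inv₀] at *; rw [ha]
        algebraMap_mem' := fun q => σ.commutes q }
    have hmemT : ∀ x : CyclotomicField r ℚ, x ∈ T ↔ σ x = x := fun x => Iff.rfl
    have hKT : ℚ⟮ζ + ζ⁻¹⟯ ≤ T := by
      refine adjoin_le_iff.mpr ?_
      intro w hw
      rw [Set.mem_singleton_iff] at hw
      subst hw
      exact (hmemT _).mpr hσc
    have hζK : ζ ∈ ℚ⟮ζ + ζ⁻¹⟯ := by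
      have hy2 : algebraMap (ℚ⟮ζ + ζ⁻¹⟯) (CyclotomicField r ℚ) y ∈ ℚ⟮ζ + ζ⁻¹⟯ := y.2
      rwa [hy] at hy2
    have hfix : σ ζ = ζ := (hmemT _).mp (hKT hζK)
    rw [hσζ] at hfix
    have hsq : ζ ^ 2 = 1 := by
      rw [pow_two]
      nth_rewrite 1 [← hfix]
      exact inv_mul_cancel₀ hζ0
    have hdvd := hζ.dvd_of_pow_eq_one 2 hsq
    have := Nat.le_of_dvd (by norm_num) hdvd
    omega
  -- finrank K L = 2
  have hζint : IsIntegral (ℚ⟮ζ + ζ⁻¹⟯) ζ := (hζ.isIntegral r.pos).tower_top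
  have hadj : (ℚ⟮ζ + ζ⁻¹⟯)⟮ζ⟯ = ⊤ := by
    rw [eq_top_iff]
    intro x _
    have h1 : Algebra.adjoin ℚ ({ζ} : Set (CyclotomicField r ℚ)) = ⊤ :=
      IsCyclotomicExtension.adjoin_primitive_root_eq_top hζ
    have h2 : x ∈ Algebra.adjoin ℚ ({ζ} : Set (CyclotomicField r ℚ)) := by rw [h1]; trivial
    have h3 : Algebra.adjoin ℚ ({ζ} : Set (CyclotomicField r ℚ)) ≤
        Subalgebra.restrictScalars ℚ
          (Algebra.adjoin (ℚ⟮ζ + ζ⁻¹⟯) ({ζ} : Set (CyclotomicField r ℚ))) := by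
      apply Algebra.adjoin_le
      intro y hy
      exact Algebra.subset_adjoin hy
    exact algebra_adjoin_le_adjoin (ℚ⟮ζ + ζ⁻¹⟯) {ζ} (h3 h2)
  have hrank2 : Module.finrank (ℚ⟮ζ + ζ⁻¹⟯) (CyclotomicField r ℚ) = 2 := by
    have hfr := adjoin.finrank hζint
    rw [hadj, finrank_top'] at hfr
    have hP : Polynomial.aeval ζ (Polynomial.X ^ 2
        - Polynomial.C (AdjoinSimple.gen ℚ (ζ + ζ⁻¹)) * Polynomial.X + 1) = 0 := by
      simp only [map_add, map_sub, map_mul, map_pow, Polynomial.aeval_X,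
        Polynomial.aeval_C, map_one]
      rw [AdjoinSimple.algebraMap_gen]
      field_simp
      ring
    have hdeg : (Polynomial.X ^ 2
        - Polynomial.C (AdjoinSimple.gen ℚ (ζ + ζ⁻¹)) * Polynomial.X + 1
        : Polynomial (ℚ⟮ζ + ζ⁻¹⟯)).degree = 2 := by
      compute_degree!
    have hne : (Polynomial.X ^ 2
        - Polynomial.C (AdjoinSimple.gen ℚ (ζ + ζ⁻¹)) * Polynomial.X + 1
        : Polynomial (ℚ⟮ζ + ζ⁻¹⟯)) ≠ 0 := by
      intro h
      rw [h] at hdeg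
      simp at hdeg
    have hmin := minpoly.degree_le_of_ne_zero (ℚ⟮ζ + ζ⁻¹⟯) ζ hne hP
    rw [hdeg] at hmin
    have hle : (minpoly (ℚ⟮ζ + ζ⁻¹⟯) ζ).natDegree ≤ 2 :=
      Polynomial.natDegree_le_iff_degree_le.mpr hmin
    have hge := (minpoly.two_le_natDegree_iff hζint).mpr hnotmem
    omega
  -- set up the integer ring elements
  set η : 𝓞 (ℚ⟮ζ + ζ⁻¹⟯) := θj - θk with hηdef
  set z : 𝓞 (CyclotomicField r ℚ) := hζ.toInteger with hzdef
  have hz_pow : z ^ (r : ℕ) = 1 := hζ.toInteger_isPrimitiveRoot.pow_eq_one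
  have hzunit : IsUnit z := by
    refine IsUnit.of_mul_eq_one (z ^ ((r : ℕ) - 1)) ?_
    rw [← pow_succ']
    rw [show (r : ℕ) - 1 + 1 = (r : ℕ) by omega]
    exact hz_pow
  set η' : 𝓞 (CyclotomicField r ℚ) :=
    algebraMap (𝓞 (ℚ⟮ζ + ζ⁻¹⟯)) (𝓞 (CyclotomicField r ℚ)) η with hη'def
  have hcoe : (η' : CyclotomicField r ℚ) =
      algebraMap (ℚ⟮ζ + ζ⁻¹⟯) (CyclotomicField r ℚ) (η : ℚ⟮ζ + ζ⁻¹⟯) := rfl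
  have hfac : η' = z ^ j * ((1 - z ^ (k - j)) * (1 - z ^ ((r : ℕ) - (j + k)))) := by
    apply NumberField.RingOfIntegers.ext
    have hz_coe : (z : CyclotomicField r ℚ) = ζ := rfl
    have hηK : (η : ℚ⟮ζ + ζ⁻¹⟯) = (θj : ℚ⟮ζ + ζ⁻¹⟯) - (θk : ℚ⟮ζ + ζ⁻¹⟯) := by
      rw [hηdef]; exact map_sub (algebraMap (𝓞 (ℚ⟮ζ + ζ⁻¹⟯)) (ℚ⟮ζ + ζ⁻¹⟯)) _ _
    have hinvpow : ∀ a : ℕ, a ≤ (r : ℕ) → ζ⁻¹ ^ a = ζ ^ ((r : ℕ) - a) := by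
      intro a ha
      rw [inv_pow]
      refine inv_eq_of_mul_eq_one_left ?_
      rw [← pow_add, Nat.sub_add_cancel ha]
      exact hζ.pow_eq_one
    have e1 : ζ ^ j * ζ ^ (k - j) = ζ ^ k := by rw [← pow_add]; congr 1; omega
    have e2 : ζ ^ j * ζ ^ ((r : ℕ) - (j + k)) = ζ ^ ((r : ℕ) - k) := by
      rw [← pow_add]; congr 1; omega
    have e3 : ζ ^ j * (ζ ^ (k - j) * ζ ^ ((r : ℕ) - (j + k))) = ζ ^ ((r : ℕ) - j) := by
      rw [← pow_add, ← pow_add]; congr 1; omega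
    calc (η' : CyclotomicField r ℚ)
        = algebraMap (ℚ⟮ζ + ζ⁻¹⟯) (CyclotomicField r ℚ) ((θj : ℚ⟮ζ + ζ⁻¹⟯))
          - algebraMap (ℚ⟮ζ + ζ⁻¹⟯) (CyclotomicField r ℚ) ((θk : ℚ⟮ζ + ζ⁻¹⟯)) := by
          rw [hcoe, hηK, map_sub]
      _ = (ζ ^ j + ζ⁻¹ ^ j) - (ζ ^ k + ζ⁻¹ ^ k) := by rw [hθj, hθk]
      _ = ζ ^ j * ((1 - ζ ^ (k - j)) * (1 - ζ ^ ((r : ℕ) - (j + k)))) := by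
          rw [hinvpow j (by omega), hinvpow k (by omega)]
          linear_combination e1 + e2 - e3
      _ = ((z ^ j * ((1 - z ^ (k - j)) * (1 - z ^ ((r : ℕ) - (j + k))))
          : 𝓞 (CyclotomicField r ℚ)) : CyclotomicField r ℚ) := by
          push_cast [hz_coe]
          ring
  -- z - 1 is prime with norm r
  have hprime_z1 : Prime (z - 1) := hζ.zeta_sub_one_prime'
  have hnz : Algebra.norm ℤ (z - 1) = (r : ℤ) := by
    refine hζ.norm_toInteger_sub_one_of_prime_ne_two' ?_
    intro h
    rw [h] at hr5
    norm_num at hr5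
  -- associated computation
  have hco : ∀ m : ℕ, 0 < m → m < (r : ℕ) → Nat.Coprime m (r : ℕ) := by
    intro m h1 h2
    exact Nat.coprime_comm.mp (hr.coprime_iff_not_dvd.mpr
      (fun hd => absurd (Nat.le_of_dvd h1 hd) (not_le.mpr h2)))
  have a1 : Associated (1 - z) (1 - z ^ (k - j)) :=
    aux_assoc hz_pow (hco _ (by omega) (by omega)) hr1
  have a2 : Associated (1 - z) (1 - z ^ ((r : ℕ) - (j + k))) :=
    aux_assoc hz_pow (hco _ (by omega) (by omega)) hr1
  have hassoc : Associated ((z - 1) ^ 2) η' := by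
    have h12 := a1.mul_mul a2
    have hsqeq : ((z - 1) ^ 2 : 𝓞 (CyclotomicField r ℚ)) = (1 - z) * (1 - z) := by ring
    rw [hsqeq, hfac]
    refine h12.trans ?_
    have hu : IsUnit (z ^ j) := hzunit.pow j
    exact ⟨hu.unit, by rw [IsUnit.unit_spec]; ring⟩
  have hnormη' : (Algebra.norm ℤ η').natAbs = (r : ℕ) ^ 2 := by
    have h2 := hassoc.map (Algebra.norm ℤ (S := 𝓞 (CyclotomicField r ℚ)))
    rw [map_pow, hnz] at h2
    have h3 := Int.associated_iff_natAbs.mp h2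
    rw [← h3]
    simp [Int.natAbs_pow]
  -- norm of η
  have hQnorm : ((Algebra.norm ℤ η' : ℤ) : ℚ) = ((Algebra.norm ℤ η : ℤ) : ℚ) ^ 2 := by
    rw [Algebra.coe_norm_int, Algebra.coe_norm_int, hcoe,
      ← Algebra.norm_norm (R := ℚ) (S := ℚ⟮ζ + ζ⁻¹⟯)
        (a := algebraMap (ℚ⟮ζ + ζ⁻¹⟯) (CyclotomicField r ℚ) (η : ℚ⟮ζ + ζ⁻¹⟯)),
      Algebra.norm_algebraMap, hrank2, map_pow]
  have hnormη : (Algebra.norm ℤ η).natAbs = (r : ℕ) := by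
    have h4 : (Algebra.norm ℤ η') = (Algebra.norm ℤ η) ^ 2 := by exact_mod_cast hQnorm
    have h5 : ((Algebra.norm ℤ η).natAbs) ^ 2 = (r : ℕ) ^ 2 := by
      rw [← Int.natAbs_pow, ← h4]; exact hnormη'
    exact Nat.pow_left_injective (by norm_num) h5
  have hη0 : η ≠ 0 := by
    intro h
    rw [h, Algebra.norm_zero] at hnormη
    simp at hnormη
    omega
  have habs : Ideal.absNorm (Ideal.span {η}) = (r : ℕ) := by
    rw [Ideal.absNorm_span_singleton]; exact hnormη
  have hprimeη : Prime η := by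
    refine Ideal.prime_of_irreducible_absNorm_span hη0 ?_
    rw [habs]
    exact hr
  have hspan_prime : (Ideal.span {η}).IsPrime := (Ideal.span_singleton_prime hη0).mpr hprimeη
  have hspan_r : ((r : ℕ) : 𝓞 (ℚ⟮ζ + ζ⁻¹⟯)) ∈ Ideal.span {η} := by
    have := Ideal.absNorm_mem (Ideal.span {η})
    rwa [habs] at this
  -- uniqueness of the prime over r
  have huniq : ∀ P : Ideal (𝓞 (ℚ⟮ζ + ζ⁻¹⟯)), P.IsPrime → ((r : ℕ) : 𝓞 (ℚ⟮ζ + ζ⁻¹⟯)) ∈ P →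
      P = Ideal.comap (algebraMap (𝓞 (ℚ⟮ζ + ζ⁻¹⟯)) (𝓞 (CyclotomicField r ℚ)))
        (Ideal.span {z - 1}) := by
    intro P hP hrP
    haveI := hP
    obtain ⟨Q, -, hQprime, hQcomap⟩ := Ideal.exists_ideal_over_prime_of_isIntegral P
        (⊥ : Ideal (𝓞 (CyclotomicField r ℚ))) (by
      intro x hx
      have h0 : algebraMap (𝓞 (ℚ⟮ζ + ζ⁻¹⟯)) (𝓞 (CyclotomicField r ℚ)) x = 0 := by
        simpa using hx
      have h0' : (algebraMap (𝓞 (ℚ⟮ζ + ζ⁻¹⟯)) (𝓞 (CyclotomicField r ℚ)) x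
          : CyclotomicField r ℚ) = 0 := by rw [h0]; simp
      have h1 : algebraMap (ℚ⟮ζ + ζ⁻¹⟯) (CyclotomicField r ℚ) (x : ℚ⟮ζ + ζ⁻¹⟯) = 0 := h0'
      have h2 : (x : ℚ⟮ζ + ζ⁻¹⟯) = 0 := (map_eq_zero _).mp h1
      have h3 : x = 0 := by exact_mod_cast h2
      rw [h3]; exact P.zero_mem)
    have hrQ : ((r : ℕ) : 𝓞 (CyclotomicField r ℚ)) ∈ Q := by
      have h1 : algebraMap (𝓞 (ℚ⟮ζ + ζ⁻¹⟯)) (𝓞 (CyclotomicField r ℚ))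
          ((r : ℕ) : 𝓞 (ℚ⟮ζ + ζ⁻¹⟯)) ∈ Q := by
        rw [← hQcomap] at hrP; exact hrP
      rwa [map_natCast] at h1
    have hz1Q : z - 1 ∈ Q := aux_sub_one_mem hr hQprime hrQ hz_pow
    have hQeq : Ideal.span {z - 1} = Q := by
      have hspan_prime' : (Ideal.span {z - 1}).IsPrime :=
        (Ideal.span_singleton_prime hprime_z1.ne_zero).mpr hprime_z1
      have hmax : (Ideal.span {z - 1}).IsMaximal := by
        refine Ideal.IsPrime.isMaximal hspan_prime' ?_
        rw [Ne, Ideal.span_singleton_eq_bot]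
        exact hprime_z1.ne_zero
      exact hmax.eq_of_le hQprime.ne_top ((Ideal.span_singleton_le_iff_mem _).mpr hz1Q)
    rw [← hQcomap, ← hQeq]
  rw [huniq _ hspan_prime hspan_r, huniq 𝔯 h𝔯 h𝔯r]
end

section
/- Let a, b be coprime integers, not both odd, with b odd, r an odd prime, and suppose a^{2p} + b^{2q} = c^r for some integer c. Then there exist coprime integers a₀, b₀ such that a^p + b^q·i = (a₀ + b₀·i)^r in ℤ[i] (after possibly multiplying a₀ + b₀·i by a unit) and c = a₀² + b₀². -/
theorem gaussian_descent (p q r : ℕ) (hp : p.Prime) (hq : q.Prime)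
    (hr : r.Prime) (hrodd : Odd r)
    (a b c : ℤ) (hab : IsCoprime a b) (ha : Even a) (hb : Odd b)
    (h : a ^ (2 * p) + b ^ (2 * q) = c ^ r) :
    ∃ a₀ b₀ : ℤ, IsCoprime a₀ b₀ ∧
      (∃ u : GaussianIntˣ,
        (⟨a ^ p, b ^ q⟩ : GaussianInt) = (u : GaussianInt) * (⟨a₀, b₀⟩ : GaussianInt) ^ r) ∧
      c = a₀ ^ 2 + b₀ ^ 2 := by
  set z : GaussianInt := ⟨a ^ p, b ^ q⟩ with hz
  -- the norm of z is c ^ r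
  have hnormz : z.norm = c ^ r := by
    rw [Zsqrtd.norm_def]
    have : a ^ p * a ^ p = a ^ (2 * p) := by ring
    have : b ^ q * b ^ q = b ^ (2 * q) := by ring
    simp only [hz]
    rw [← h]; ring
  -- c is odd
  have hcodd : Odd c := by
    rcases Int.even_or_odd c with hc | hc
    · exfalso
      have h1 : Even (a ^ (2 * p)) := (Int.even_pow).mpr ⟨ha, Nat.mul_ne_zero two_ne_zero hp.ne_zero⟩
      have h2 : Odd (b ^ (2 * q)) := hb.pow
      have h3 : Odd (c ^ r) := h ▸ h1.add_odd h2
      have h4 : Even (c ^ r) := (Int.even_pow).mpr ⟨hc, hr.ne_zero⟩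
      exact (Int.not_odd_iff_even.mpr h4) h3
    · exact hc
  -- z * star z = c ^ r
  have hmul : z * star z = ((c : GaussianInt)) ^ r := by
    have := (Zsqrtd.norm_eq_mul_conj z).symm
    rw [hnormz] at this
    rw [this, Int.cast_pow]
  -- star z
  have hstar : star z = ⟨a ^ p, -(b ^ q)⟩ := Zsqrtd.star_mk _ _
  -- coprimality of z and star z
  obtain ⟨u, v, huv⟩ := (hab.pow (m := p) (n := q))
  have h2c : IsCoprime (2 : ℤ) (c ^ r) := by
    refine IsCoprime.pow_right ?_
    rw [Int.prime_two.coprime_iff_not_dvd]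
    obtain ⟨k, hk⟩ := hcodd
    omega
  obtain ⟨m, n, hmn⟩ := h2c
  have hcop : IsCoprime z (star z) := by
    refine ⟨⟨m * u + n * a ^ p, -(m * v) - n * b ^ q⟩, ⟨m * u, m * v⟩, ?_⟩
    rw [hstar, hz]
    rw [Zsqrtd.ext_iff]
    refine ⟨?_, ?_⟩ <;>
      simp only [Zsqrtd.re_add, Zsqrtd.im_add, Zsqrtd.re_mul, Zsqrtd.im_mul,
        Zsqrtd.re_one, Zsqrtd.im_one]
    · have hh : a ^ p * a ^ p = a ^ (2 * p) := by ring
      have hh2 : b ^ q * b ^ q = b ^ (2 * q) := by ring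
      linear_combination n * h + 2 * m * huv + hmn
    · ring
  -- z is associated to an r-th power
  obtain ⟨w, uu, hw⟩ := exists_associated_pow_of_mul_eq_pow' hcop hmul
  refine ⟨w.re, w.im, ?_, ⟨uu, ?_⟩, ?_⟩
  · -- coprimality of w.re, w.im
    rw [Int.isCoprime_iff_gcd_eq_one]
    set g : ℕ := Int.gcd w.re w.im with hg
    have hgw : ((g : ℤ) : GaussianInt) ∣ w := by
      rw [Zsqrtd.intCast_dvd]
      exact ⟨Int.gcd_dvd_left _ _, Int.gcd_dvd_right _ _⟩
    have hwz : w ∣ z := by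
      rw [← hw]
      exact Dvd.dvd.mul_right (dvd_pow_self w hr.ne_zero) _
    have hgz : ((g : ℤ) : GaussianInt) ∣ z := hgw.trans hwz
    have hgsz : ((g : ℤ) : GaussianInt) ∣ star z := by
      obtain ⟨t, ht⟩ := hgz
      exact ⟨star t, by rw [ht, star_mul', star_intCast]⟩
    have hunit : IsUnit ((g : ℤ) : GaussianInt) := hcop.isUnit_of_dvd' hgz hgsz
    have : IsUnit (Zsqrtd.norm ((g : ℤ) : GaussianInt)) :=
      (Zsqrtd.isUnit_iff_norm_isUnit _).mp hunit
    rw [Zsqrtd.norm_intCast] at this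
    have := Int.isUnit_iff.mp this
    rcases this with h1 | h1
    · have : (g : ℤ) = 1 ∨ (g : ℤ) = -1 := by
        have := mul_self_eq_one_iff.mp h1
        exact this
      rcases this with h2 | h2
      · exact_mod_cast h2
      · omega
    · nlinarith [sq_nonneg ((g : ℤ))]
  · -- z = uu * w ^ r
    have : (⟨w.re, w.im⟩ : GaussianInt) = w := rfl
    rw [this, ← hw]; ring
  · -- c = w.re ^ 2 + w.im ^ 2
    have hnw : Zsqrtd.norm (w ^ r * (uu : GaussianInt)) = z.norm := by rw [hw]
    have hnu : Zsqrtd.norm (uu : GaussianInt) = 1 := by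
      have h1 : IsUnit (Zsqrtd.norm (uu : GaussianInt)) :=
        (Zsqrtd.isUnit_iff_norm_isUnit _).mp uu.isUnit
      have h2 : 0 ≤ Zsqrtd.norm (uu : GaussianInt) :=
        Zsqrtd.norm_nonneg (by norm_num) _
      rcases Int.isUnit_iff.mp h1 with h3 | h3
      · exact h3
      · omega
    rw [Zsqrtd.norm_mul, hnu, mul_one, hnormz] at hnw
    have hnp : ∀ k : ℕ, Zsqrtd.norm (w ^ k) = (Zsqrtd.norm w) ^ k := by
      intro k
      induction k with
      | zero => simp
      | succ k ih => rw [pow_succ, pow_succ, Zsqrtd.norm_mul, ih]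
    rw [hnp] at hnw
    have hc : c = Zsqrtd.norm w := (hrodd.strictMono_pow (R := ℤ)).injective hnw.symm
    rw [hc, Zsqrtd.norm_def]
    ring
end

section
/- Let r ≥ 5 be a prime, ζ a primitive r-th root of unity, θ_j = ζ^j + ζ^{-j}, and a₀, b₀ integers. Then for each j with 1 ≤ j ≤ (r-1)/2, ((a₀+b₀i) + (a₀−b₀i)ζ^j)·((a₀+b₀i) + (a₀−b₀i)ζ^{-j}) = (θ_j + 2)·a₀² + (θ_j − 2)·b₀², and consequently (1/2)·((a₀+b₀i)^r + (a₀−b₀i)^r) = a₀ · ∏_{j=1}^{(r-1)/2} ((θ_j+2)a₀² + (θ_j−2)b₀²). -/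
open Complex

theorem descent_factorization (r : ℕ) (hr : r.Prime) (hr5 : 5 ≤ r)
    (ζ : ℂ) (hζ : IsPrimitiveRoot ζ r) (a₀ b₀ : ℤ) :
    (∀ j : ℕ, 1 ≤ j → j ≤ (r - 1) / 2 →
      (((a₀ : ℂ) + b₀ * I) + ((a₀ : ℂ) - b₀ * I) * ζ ^ j) *
        (((a₀ : ℂ) + b₀ * I) + ((a₀ : ℂ) - b₀ * I) * (ζ ^ j)⁻¹) =
      ((ζ ^ j + (ζ ^ j)⁻¹) + 2) * (a₀ : ℂ) ^ 2 + ((ζ ^ j + (ζ ^ j)⁻¹) - 2) * (b₀ : ℂ) ^ 2) ∧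
    (1 / 2 * (((a₀ : ℂ) + b₀ * I) ^ r + ((a₀ : ℂ) - b₀ * I) ^ r) =
      (a₀ : ℂ) * ∏ j ∈ Finset.Icc 1 ((r - 1) / 2),
        (((ζ ^ j + (ζ ^ j)⁻¹) + 2) * (a₀ : ℂ) ^ 2 +
          ((ζ ^ j + (ζ ^ j)⁻¹) - 2) * (b₀ : ℂ) ^ 2)) := by
  have hrpos : 0 < r := by omega
  have hodd : Odd r := hr.odd_of_ne_two (by omega)
  have hζ0 : ζ ≠ 0 := hζ.ne_zero (by omega)
  set A : ℂ := (a₀ : ℂ) + b₀ * I with hA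
  set B : ℂ := (a₀ : ℂ) - b₀ * I with hB
  have key : ∀ j : ℕ, (A + B * ζ ^ j) * (A + B * (ζ ^ j)⁻¹) =
      ((ζ ^ j + (ζ ^ j)⁻¹) + 2) * (a₀ : ℂ) ^ 2 +
        ((ζ ^ j + (ζ ^ j)⁻¹) - 2) * (b₀ : ℂ) ^ 2 := by
    intro j
    have hz : ζ ^ j ≠ 0 := pow_ne_zero _ hζ0
    have hzz : ζ ^ j * (ζ ^ j)⁻¹ = 1 := mul_inv_cancel₀ hz
    rw [hA, hB]
    linear_combination ((2 - (ζ ^ j + (ζ ^ j)⁻¹)) * (b₀ : ℂ) ^ 2) * Complex.I_sq +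
      ((a₀ : ℂ) - b₀ * I) ^ 2 * hzz
  refine ⟨fun j _ _ => key j, ?_⟩
  set m := (r - 1) / 2 with hm
  have hrm : r = 2 * m + 1 := by
    obtain ⟨k, hk⟩ := hodd; omega
  have h1 : A ^ r + B ^ r = ∏ μ ∈ Polynomial.nthRootsFinset r (1 : ℂ), (A + μ * B) :=
    hζ.pow_add_pow_eq_prod_add_mul A B hodd
  have h2 : ∏ μ ∈ Polynomial.nthRootsFinset r (1 : ℂ), (A + μ * B) =
      ∏ j ∈ Finset.range r, (A + ζ ^ j * B) := by
    refine (Finset.prod_nbij (fun j => ζ ^ j) ?_ ?_ ?_ (fun _ _ => rfl)).symm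
    · intro j _
      exact (Polynomial.mem_nthRootsFinset hrpos 1).2
        (by rw [← pow_mul, mul_comm, pow_mul, hζ.pow_eq_one, one_pow])
    · intro a ha b hb H
      exact hζ.pow_inj (Finset.mem_range.1 ha) (Finset.mem_range.1 hb) H
    · intro μ hμ
      haveI : NeZero r := ⟨by omega⟩
      obtain ⟨i, hi, hi'⟩ := hζ.eq_pow_of_pow_eq_one ((Polynomial.mem_nthRootsFinset hrpos 1).1 hμ)
      exact ⟨i, by simpa using hi, hi'⟩
  have hrange : Finset.range r = insert 0 (Finset.Ioc 0 (2 * m)) := by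
    ext x
    simp only [Finset.mem_range, Finset.mem_insert, Finset.mem_Ioc]
    omega
  have h3 : ∏ j ∈ Finset.range r, (A + ζ ^ j * B) =
      (A + B) * ∏ j ∈ Finset.Ioc 0 (2 * m), (A + ζ ^ j * B) := by
    rw [hrange, Finset.prod_insert (by simp)]
    simp
  have h4 : (∏ j ∈ Finset.Ioc 0 m, (A + ζ ^ j * B)) *
      ∏ j ∈ Finset.Ioc m (2 * m), (A + ζ ^ j * B) =
      ∏ j ∈ Finset.Ioc 0 (2 * m), (A + ζ ^ j * B) :=
    Finset.prod_Ioc_consecutive _ (by omega) (by omega)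
  have h5 : ∏ j ∈ Finset.Ioc m (2 * m), (A + ζ ^ j * B) =
      ∏ j ∈ Finset.Ioc 0 m, (A + ζ ^ (r - j) * B) := by
    refine Finset.prod_nbij' (fun j => r - j) (fun j => r - j) ?_ ?_ ?_ ?_ ?_
    · intro a ha; simp only [Finset.mem_Ioc] at *; omega
    · intro a ha; simp only [Finset.mem_Ioc] at *; omega
    · intro a ha; simp only [Finset.mem_Ioc] at *; omega
    · intro a ha; simp only [Finset.mem_Ioc] at *; omega
    · intro a ha
      simp only [Finset.mem_Ioc] at ha
      have : r - (r - a) = a := by omega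
      rw [this]
  have hinv : ∀ j ∈ Finset.Ioc 0 m, ζ ^ (r - j) = (ζ ^ j)⁻¹ := by
    intro j hj
    simp only [Finset.mem_Ioc] at hj
    have h : ζ ^ (r - j) * ζ ^ j = 1 := by
      rw [← pow_add]
      have : r - j + j = r := by omega
      rw [this, hζ.pow_eq_one]
    exact eq_inv_of_mul_eq_one_left h
  have h6 : ∏ j ∈ Finset.Ioc 0 m, ((A + ζ ^ j * B) * (A + ζ ^ (r - j) * B)) =
      ∏ j ∈ Finset.Icc 1 m, (((ζ ^ j + (ζ ^ j)⁻¹) + 2) * (a₀ : ℂ) ^ 2 +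
        ((ζ ^ j + (ζ ^ j)⁻¹) - 2) * (b₀ : ℂ) ^ 2) := by
    rw [show Finset.Icc 1 m = Finset.Ioc 0 m by ext x; simp [Finset.mem_Ioc]; omega]
    refine Finset.prod_congr rfl fun j hj => ?_
    rw [hinv j hj, mul_comm (ζ ^ j) B, mul_comm ((ζ ^ j)⁻¹) B]
    exact key j
  have hAB : A + B = 2 * (a₀ : ℂ) := by rw [hA, hB]; ring
  rw [h1, h2, h3, hAB, ← h4, h5, ← Finset.prod_mul_distrib, h6]
  ring
end

section
/- Let K be a number field in which 2 is inert, with 𝔓 = 2O_K, and let S be a finite set of primes of O_K containing 𝔓. Suppose ν ∈ O_K^× and λ' = (1+ν)(1−ν) ∈ O_S^× with v_𝔓(λ') = s₀ ≥ 5. If v_𝔓(1+ν) = 1, then λ'' = −(1−ν)²/(4ν) and μ'' = (1+ν)²/(4ν) satisfy λ'', μ'' ∈ O_S^×, λ'' + μ'' = 1, and v_𝔓(λ'') = 2s₀ − 4 > s₀. -/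
open NumberField IsDedekindDomain
open scoped Classical

/-- The additive `v`-adic valuation of an element of a number field, valued in `ℤ`
(with the convention that the valuation of `0` is `0`). -/
noncomputable def addVal (K : Type*) [Field K] [NumberField K]
    (v : HeightOneSpectrum (𝓞 K)) (x : K) : ℤ :=
  if hx : x = 0 then 0
  else - Multiplicative.toAdd (WithZero.unzero ((Valuation.ne_zero_iff _).mpr hx :
    (v.valuation K : Valuation K _) x ≠ 0))

/-- `x` is an `S`-unit: it is nonzero and has valuation `0` at every prime outside `S`. -/
def IsSUnit (K : Type*) [Field K] [NumberField K]
    (S : Finset (HeightOneSpectrum (𝓞 K))) (x : K) : Prop :=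
  x ≠ 0 ∧ ∀ v : HeightOneSpectrum (𝓞 K), v ∉ S → addVal K v x = 0

section aux
variable {K : Type*} [Field K] [NumberField K] (v : HeightOneSpectrum (𝓞 K))

lemma valuation_eq_ofAdd {x : K} (hx : x ≠ 0) :
    (v.valuation K x : WithZero (Multiplicative ℤ)) = Multiplicative.ofAdd (-(addVal K v x)) := by
  rw [addVal, dif_neg hx, neg_neg, ofAdd_toAdd, WithZero.coe_unzero]

lemma addVal_eq_of_valuation {x : K} (hx : x ≠ 0) {a : ℤ}
    (h : (v.valuation K x : WithZero (Multiplicative ℤ)) = Multiplicative.ofAdd (-a)) :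
    addVal K v x = a := by
  have h2 := valuation_eq_ofAdd v hx
  rw [h] at h2
  simpa using (Multiplicative.ofAdd.injective (WithZero.coe_inj.mp h2)).symm

lemma addVal_mul {x y : K} (hx : x ≠ 0) (hy : y ≠ 0) :
    addVal K v (x * y) = addVal K v x + addVal K v y := by
  apply addVal_eq_of_valuation v (mul_ne_zero hx hy)
  rw [Valuation.map_mul, valuation_eq_ofAdd v hx, valuation_eq_ofAdd v hy,
    ← WithZero.coe_mul, ← ofAdd_add, neg_add]

lemma addVal_neg (x : K) : addVal K v (-x) = addVal K v x := by
  by_cases hx : x = 0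
  · rw [hx, neg_zero]
  · exact addVal_eq_of_valuation v (neg_ne_zero.mpr hx) (by rw [Valuation.map_neg]; exact valuation_eq_ofAdd v hx)

lemma addVal_one : addVal K v (1 : K) = 0 :=
  addVal_eq_of_valuation v one_ne_zero (by simp)

lemma addVal_inv {x : K} (hx : x ≠ 0) : addVal K v x⁻¹ = - addVal K v x := by
  have := addVal_mul v hx (inv_ne_zero hx)
  rw [mul_inv_cancel₀ hx, addVal_one] at this
  linarith

lemma addVal_div {x y : K} (hx : x ≠ 0) (hy : y ≠ 0) :
    addVal K v (x / y) = addVal K v x - addVal K v y := by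
  rw [div_eq_mul_inv, addVal_mul v hx (inv_ne_zero hy), addVal_inv v hy, sub_eq_add_neg]

lemma addVal_nonneg {r : 𝓞 K} (hr : r ≠ 0) :
    0 ≤ addVal K v (algebraMap (𝓞 K) K r) := by
  have hx : algebraMap (𝓞 K) K r ≠ 0 := by
    simpa using hr
  have h1 : (v.valuation K (algebraMap (𝓞 K) K r) : WithZero (Multiplicative ℤ)) ≤ 1 :=
    v.valuation_le_one r
  rw [valuation_eq_ofAdd v hx] at h1
  rw [show (1 : WithZero (Multiplicative ℤ)) = (Multiplicative.ofAdd (0 : ℤ) : Multiplicative ℤ) by simp] at h1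
  rw [WithZero.coe_le_coe, Multiplicative.ofAdd_le] at h1
  linarith

lemma addVal_unit (u : (𝓞 K)ˣ) : addVal K v (algebraMap (𝓞 K) K (u : 𝓞 K)) = 0 := by
  have hu : ((u : 𝓞 K) : K) ≠ 0 := by
    simpa using u.ne_zero
  have hiu : (((u⁻¹ : (𝓞 K)ˣ) : 𝓞 K) : K) ≠ 0 := by
    simpa using (u⁻¹ : (𝓞 K)ˣ).ne_zero
  have h1 := addVal_nonneg v (u.ne_zero)
  have h2 := addVal_nonneg v ((u⁻¹ : (𝓞 K)ˣ).ne_zero)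
  have h3 : addVal K v (algebraMap (𝓞 K) K (u : 𝓞 K) * algebraMap (𝓞 K) K ((u⁻¹ : (𝓞 K)ˣ) : 𝓞 K)) = 0 := by
    rw [← map_mul, ← Units.val_mul, mul_inv_cancel, Units.val_one, map_one, addVal_one]
  rw [addVal_mul v hu hiu] at h3
  linarith

end aux

theorem valuation_growth (K : Type*) [Field K] [NumberField K]
    (P : HeightOneSpectrum (𝓞 K)) (hP : P.asIdeal = Ideal.span {(2 : 𝓞 K)})
    (S : Finset (HeightOneSpectrum (𝓞 K))) (hPS : P ∈ S)
    (ν : (𝓞 K)ˣ) (n : K) (hn : n = algebraMap (𝓞 K) K (ν : 𝓞 K))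
    (hlam' : IsSUnit K S ((1 + n) * (1 - n)))
    (s₀ : ℤ) (hs₀ : s₀ = addVal K P ((1 + n) * (1 - n))) (hs₀5 : 5 ≤ s₀)
    (h1 : addVal K P (1 + n) = 1) :
    IsSUnit K S (-(1 - n) ^ 2 / (4 * n)) ∧ IsSUnit K S ((1 + n) ^ 2 / (4 * n)) ∧
      -(1 - n) ^ 2 / (4 * n) + (1 + n) ^ 2 / (4 * n) = 1 ∧
      addVal K P (-(1 - n) ^ 2 / (4 * n)) = 2 * s₀ - 4 ∧
      s₀ < addVal K P (-(1 - n) ^ 2 / (4 * n)) := by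
  have h2ne : (2 : 𝓞 K) ≠ 0 := two_ne_zero
  -- basic nonvanishing
  have hnne : n ≠ 0 := by
    rw [hn]; simpa using ν.ne_zero
  have hprod : (1 + n) * (1 - n) ≠ 0 := hlam'.1
  have hpne : (1 + n) ≠ 0 := fun h => hprod (by rw [h, zero_mul])
  have hmne : (1 - n) ≠ 0 := fun h => hprod (by rw [h, mul_zero])
  have h4ne : (4 : K) * n ≠ 0 := mul_ne_zero (by norm_num) hnne
  have hLne : -(1 - n) ^ 2 / (4 * n) ≠ 0 := by
    apply div_ne_zero _ h4ne
    simpa using pow_ne_zero 2 hmne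
  have hMne : (1 + n) ^ 2 / (4 * n) ≠ 0 := div_ne_zero (pow_ne_zero 2 hpne) h4ne
  -- valuation of n is 0 everywhere
  have hvn : ∀ v : HeightOneSpectrum (𝓞 K), addVal K v n = 0 := by
    intro v; rw [hn]; exact addVal_unit v ν
  -- 1 ± n are algebraic integers
  have hplus : (1 + n) = algebraMap (𝓞 K) K ((1 : 𝓞 K) + (ν : 𝓞 K)) := by
    rw [map_add, map_one, hn]
  have hminus : (1 - n) = algebraMap (𝓞 K) K ((1 : 𝓞 K) - (ν : 𝓞 K)) := by
    rw [map_sub, map_one, hn]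
  have hplusO : ((1 : 𝓞 K) + (ν : 𝓞 K)) ≠ 0 := by
    intro h; apply hpne; rw [hplus, h, map_zero]
  have hminusO : ((1 : 𝓞 K) - (ν : 𝓞 K)) ≠ 0 := by
    intro h; apply hmne; rw [hminus, h, map_zero]
  have hple : ∀ v : HeightOneSpectrum (𝓞 K), 0 ≤ addVal K v (1 + n) := by
    intro v; rw [hplus]; exact addVal_nonneg v hplusO
  have hmle : ∀ v : HeightOneSpectrum (𝓞 K), 0 ≤ addVal K v (1 - n) := by
    intro v; rw [hminus]; exact addVal_nonneg v hminusO
  -- valuation of 2 at P is 1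
  have h2K : (2 : K) = algebraMap (𝓞 K) K (2 : 𝓞 K) := by rw [map_ofNat]
  have hv2P : addVal K P (2 : K) = 1 := by
    apply addVal_eq_of_valuation P two_ne_zero
    rw [h2K, P.valuation_of_algebraMap]
    exact P.intValuation_singleton h2ne hP
  -- valuation of 2 at v ≠ P is 0
  have hv2 : ∀ v : HeightOneSpectrum (𝓞 K), v ≠ P → addVal K v (2 : K) = 0 := by
    intro v hvP
    apply addVal_eq_of_valuation v two_ne_zero
    rw [h2K, v.valuation_of_algebraMap]
    have hnd : ¬ v.asIdeal ∣ Ideal.span {(2 : 𝓞 K)} := by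
      intro hd
      apply hvP
      rw [← hP] at hd
      have hle : P.asIdeal ≤ v.asIdeal := Ideal.le_of_dvd hd
      have := (P.isMaximal.eq_of_le v.isMaximal.ne_top hle)
      exact HeightOneSpectrum.ext this.symm
    have hle1 : v.intValuation (2 : 𝓞 K) ≤ 1 := v.intValuation_le_one _
    have hnlt : ¬ v.intValuation (2 : 𝓞 K) < 1 := by
      rw [HeightOneSpectrum.intValuation_apply]
      intro h; exact hnd ((v.intValuation_lt_one_iff_dvd _).mp h)
    have : v.intValuation (2 : 𝓞 K) = 1 := le_antisymm hle1 (not_lt.mp hnlt)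
    rw [this]; simp
  -- valuation of 4 * n
  have hv4n : ∀ v : HeightOneSpectrum (𝓞 K),
      addVal K v ((4 : K) * n) = 2 * addVal K v (2 : K) := by
    intro v
    have h4 : (4 : K) = 2 * 2 := by norm_num
    rw [addVal_mul v (by norm_num) hnne, hvn, h4,
      addVal_mul v two_ne_zero two_ne_zero]
    ring
  -- the generic valuation formulas
  have hvL : ∀ v : HeightOneSpectrum (𝓞 K),
      addVal K v (-(1 - n) ^ 2 / (4 * n)) =
        2 * addVal K v (1 - n) - 2 * addVal K v (2 : K) := by
    intro v
    rw [addVal_div v (by simpa using pow_ne_zero 2 hmne) h4ne, addVal_neg, sq,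
      addVal_mul v hmne hmne, hv4n]
    ring
  have hvM : ∀ v : HeightOneSpectrum (𝓞 K),
      addVal K v ((1 + n) ^ 2 / (4 * n)) =
        2 * addVal K v (1 + n) - 2 * addVal K v (2 : K) := by
    intro v
    rw [addVal_div v (pow_ne_zero 2 hpne) h4ne, sq, addVal_mul v hpne hpne, hv4n]
    ring
  -- valuations outside S vanish
  have houtside : ∀ v : HeightOneSpectrum (𝓞 K), v ∉ S →
      addVal K v (1 + n) = 0 ∧ addVal K v (1 - n) = 0 := by
    intro v hv
    have := hlam'.2 v hv
    rw [addVal_mul v hpne hmne] at this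
    have h1 := hple v; have h2 := hmle v
    constructor <;> linarith
  -- at P : addVal P (1 - n) = s₀ - 1
  have hs₀' : addVal K P (1 - n) = s₀ - 1 := by
    rw [addVal_mul P hpne hmne, h1] at hs₀
    linarith
  refine ⟨⟨hLne, ?_⟩, ⟨hMne, ?_⟩, ?_, ?_, ?_⟩
  · intro v hv
    rw [hvL v, (houtside v hv).2, hv2 v (fun h => hv (h ▸ hPS))]
    ring
  · intro v hv
    rw [hvM v, (houtside v hv).1, hv2 v (fun h => hv (h ▸ hPS))]
    ring
  · field_simp
    ring
  · rw [hvL P, hs₀', hv2P]; ring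
  · rw [hvL P, hs₀', hv2P]; linarith
end
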